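/- arXiv:2505.22277 — 5 statements merged into one kernel-verified Lean document; each statement's English description precedes it below -/
import Mathlib

section
/- Let φ and χ be HML formulas and p a process such that χ is characteristic for p modulo HML-equivalence (that is, for every process q: q ⊨ χ iff p and q satisfy exactly the same HML formulas), and suppose p ⊨ φ. Then φ is valid if and only if neg(φ) ∨ χ is characteristic for some process modulo HML-equivalence, where neg denotes negation-normal-form negation (swapping tt with ff, ∧ with ∨, and ⟨a⟩ with [a]). -/
/-- Finite, loop-free CCS processes over the action set `Act`:
`p ::= 0 | a.p | p + p`. -/
inductive Proc (Act : Type) : Type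
  | nil : Proc Act
  | pre : Act → Proc Act → Proc Act
  | plus : Proc Act → Proc Act → Proc Act

/-- The transition relation: `a.p —a→ p`, and `p₁ + p₂ —a→ p'` iff
`p₁ —a→ p'` or `p₂ —a→ p'`. -/
inductive Step {Act : Type} : Proc Act → Act → Proc Act → Prop
  | pre (a : Act) (p : Proc Act) : Step (Proc.pre a p) a p
  | plusL : ∀ {p₁ p₂ p' : Proc Act} {a : Act},
      Step p₁ a p' → Step (Proc.plus p₁ p₂) a p'
  | plusR : ∀ {p₁ p₂ p' : Proc Act} {a : Act},
      Step p₂ a p' → Step (Proc.plus p₁ p₂) a p'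

/-- HML formulas in negation normal form:
`φ ::= tt | ff | φ∧φ | φ∨φ | ⟨a⟩φ | [a]φ`. -/
inductive HML (Act : Type) : Type
  | tt : HML Act
  | ff : HML Act
  | conj : HML Act → HML Act → HML Act
  | disj : HML Act → HML Act → HML Act
  | dia : Act → HML Act → HML Act
  | box : Act → HML Act → HML Act

/-- The satisfaction relation `p ⊨ φ`. -/
def Sat {Act : Type} : Proc Act → HML Act → Prop
  | _, HML.tt => True
  | _, HML.ff => False
  | p, HML.conj φ ψ => Sat p φ ∧ Sat p ψ
  | p, HML.disj φ ψ => Sat p φ ∨ Sat p ψ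
  | p, HML.dia a φ => ∃ p', Step p a p' ∧ Sat p' φ
  | p, HML.box a φ => ∀ p', Step p a p' → Sat p' φ

/-- `φ` entails `ψ` iff every process satisfying `φ` satisfies `ψ`. -/
def Entails {Act : Type} (φ ψ : HML Act) : Prop :=
  ∀ p : Proc Act, Sat p φ → Sat p ψ

/-- `R` is a simulation relation. -/
def IsSimulation {Act : Type} (R : Proc Act → Proc Act → Prop) : Prop :=
  ∀ p q, R p q → ∀ a p', Step p a p' → ∃ q', Step q a q' ∧ R p' q'

/-- The simulation preorder `≲_S`: the largest simulation. -/
def Sim {Act : Type} (p q : Proc Act) : Prop :=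
  ∃ R, IsSimulation R ∧ R p q

/-- The set `I(p)` of initial actions of a process. -/
def initials {Act : Type} (p : Proc Act) : Set Act :=
  {a | ∃ p', Step p a p'}

/-- Negation-normal-form negation. -/
def hmlNeg {Act : Type} : HML Act → HML Act
  | HML.tt => HML.ff
  | HML.ff => HML.tt
  | HML.conj φ ψ => HML.disj (hmlNeg φ) (hmlNeg ψ)
  | HML.disj φ ψ => HML.conj (hmlNeg φ) (hmlNeg ψ)
  | HML.dia a φ => HML.box a (hmlNeg φ)
  | HML.box a φ => HML.dia a (hmlNeg φ)


theorem sat_hmlNeg {Act : Type} (φ : HML Act) : ∀ q : Proc Act, Sat q (hmlNeg φ) ↔ ¬ Sat q φ := by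
  induction φ with
  | tt => intro q; simp [Sat, hmlNeg]
  | ff => intro q; simp [Sat, hmlNeg]
  | conj φ ψ ih1 ih2 => intro q; simp [Sat, hmlNeg, ih1 q, ih2 q]; tauto
  | disj φ ψ ih1 ih2 => intro q; simp [Sat, hmlNeg, ih1 q, ih2 q]
  | dia a φ ih => intro q; simp only [Sat, hmlNeg, ih]; push_neg; rfl
  | box a φ ih => intro q; simp only [Sat, hmlNeg, ih]; push_neg; rfl

/-- Suppose `χ` is characteristic for the process `p` modulo HML-equivalence
(i.e. `q ⊨ χ` iff `p` and `q` satisfy the same HML formulas) and `p ⊨ φ`.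
Then `φ` is valid iff `neg(φ) ∨ χ` is characteristic for some process
modulo HML-equivalence. -/
theorem valid_iff_negOrChar_characteristic {Act : Type} [Fintype Act] [Nonempty Act]
    (φ χ : HML Act) (p : Proc Act)
    (hchar : ∀ q : Proc Act, Sat q χ ↔ (∀ ψ : HML Act, Sat p ψ ↔ Sat q ψ))
    (hp : Sat p φ) :
    (∀ q : Proc Act, Sat q φ) ↔
      (∃ r : Proc Act, ∀ q : Proc Act,
        Sat q (HML.disj (hmlNeg φ) χ) ↔ (∀ ψ : HML Act, Sat r ψ ↔ Sat q ψ)) := by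
  constructor
  · intro hvalid
    refine ⟨p, fun q => ?_⟩
    have : Sat q (HML.disj (hmlNeg φ) χ) ↔ Sat q χ := by
      simp only [Sat]
      constructor
      · rintro (h | h)
        · exact absurd (hvalid q) ((sat_hmlNeg φ q).mp h)
        · exact h
      · exact Or.inr
    rw [this, hchar q]
  · rintro ⟨r, hr⟩ q
    by_contra hq
    have hqd : Sat q (HML.disj (hmlNeg φ) χ) := Or.inl ((sat_hmlNeg φ q).mpr hq)
    have hpd : Sat p (HML.disj (hmlNeg φ) χ) := Or.inr ((hchar p).mpr (fun ψ => Iff.rfl))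
    have h1 := (hr q).mp hqd φ
    have h2 := (hr p).mp hpd φ
    exact hq (h1.mp (h2.mpr hp))
end

section
/- For all formulas φ1, φ2, ψ ∈ L_S and every action a ∈ Act: φ1∧φ2 entails ⟨a⟩ψ if and only if φ1 entails ⟨a⟩ψ or φ2 entails ⟨a⟩ψ. -/
/-- The fragment `L_S`: `φ ::= tt | ff | φ∧φ | φ∨φ | ⟨a⟩φ`. -/
inductive InLS {Act : Type} : HML Act → Prop
  | tt : InLS HML.tt
  | ff : InLS HML.ff
  | conj : ∀ {φ ψ : HML Act}, InLS φ → InLS ψ → InLS (HML.conj φ ψ)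
  | disj : ∀ {φ ψ : HML Act}, InLS φ → InLS ψ → InLS (HML.disj φ ψ)
  | dia : ∀ {a : Act} {φ : HML Act}, InLS φ → InLS (HML.dia a φ)

lemma sat_plus_left {Act : Type} {φ : HML Act} (h : InLS φ) :
    ∀ p q : Proc Act, Sat p φ → Sat (Proc.plus p q) φ := by
  induction h with
  | tt => intro p q _; trivial
  | ff => intro p q hs; exact hs.elim
  | conj _ _ ih1 ih2 => intro p q hs; exact ⟨ih1 p q hs.1, ih2 p q hs.2⟩
  | disj _ _ ih1 ih2 =>
      intro p q hs
      exact hs.elim (fun h => Or.inl (ih1 p q h)) (fun h => Or.inr (ih2 p q h))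
  | dia _ ih =>
      intro p q hs
      obtain ⟨p', hst, hp'⟩ := hs
      exact ⟨p', Step.plusL hst, hp'⟩

lemma sat_plus_right {Act : Type} {φ : HML Act} (h : InLS φ) :
    ∀ p q : Proc Act, Sat q φ → Sat (Proc.plus p q) φ := by
  induction h with
  | tt => intro p q _; trivial
  | ff => intro p q hs; exact hs.elim
  | conj _ _ ih1 ih2 => intro p q hs; exact ⟨ih1 p q hs.1, ih2 p q hs.2⟩
  | disj _ _ ih1 ih2 =>
      intro p q hs
      exact hs.elim (fun h => Or.inl (ih1 p q h)) (fun h => Or.inr (ih2 p q h))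
  | dia _ ih =>
      intro p q hs
      obtain ⟨p', hst, hp'⟩ := hs
      exact ⟨p', Step.plusR hst, hp'⟩

/-- For all `φ₁, φ₂, ψ ∈ L_S` and every action `a`: `φ₁∧φ₂` entails `⟨a⟩ψ`
iff `φ₁` entails `⟨a⟩ψ` or `φ₂` entails `⟨a⟩ψ`. -/
theorem conj_entails_dia_iff {Act : Type} [Fintype Act] [Nonempty Act]
    (φ₁ φ₂ ψ : HML Act) (a : Act)
    (h₁ : InLS φ₁) (h₂ : InLS φ₂) (hψ : InLS ψ) :
    Entails (HML.conj φ₁ φ₂) (HML.dia a ψ) ↔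
      (Entails φ₁ (HML.dia a ψ) ∨ Entails φ₂ (HML.dia a ψ)) := by
  constructor
  · intro h
    by_contra hc
    push_neg at hc
    obtain ⟨hn1, hn2⟩ := hc
    simp only [Entails, not_forall] at hn1 hn2
    obtain ⟨p₁, hp₁, hd₁⟩ := hn1
    obtain ⟨p₂, hp₂, hd₂⟩ := hn2
    have := h (Proc.plus p₁ p₂)
      ⟨sat_plus_left h₁ p₁ p₂ hp₁, sat_plus_right h₂ p₁ p₂ hp₂⟩
    obtain ⟨p', hst, hp'⟩ := this
    cases hst with
    | plusL hs => exact hd₁ ⟨p', hs, hp'⟩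
    | plusR hs => exact hd₂ ⟨p', hs, hp'⟩
  · rintro (h | h) p hp
    · exact h p hp.1
    · exact h p hp.2
end

section
/- Let φ be a formula generated by the grammar φ ::= tt | ⟨a⟩φ | φ∧φ. Then for every process q: q ⊨ φ if and only if p_φ ≲_S q; consequently, φ is prime in L_S. -/
/-- Formulas generated by the grammar `φ ::= tt | ⟨a⟩φ | φ∧φ`. -/
inductive InConj {Act : Type} : HML Act → Prop
  | tt : InConj HML.tt
  | dia : ∀ {a : Act} {φ : HML Act}, InConj φ → InConj (HML.dia a φ)
  | conj : ∀ {φ ψ : HML Act}, InConj φ → InConj ψ → InConj (HML.conj φ ψ)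

/-- The process `p_φ` associated with a formula generated by
`φ ::= tt | ⟨a⟩φ | φ∧φ`: `p_tt = 0`, `p_{⟨a⟩φ'} = a.p_{φ'}`,
`p_{φ₁∧φ₂} = p_{φ₁} + p_{φ₂}`. -/
def charProc {Act : Type} : HML Act → Proc Act
  | HML.dia a φ => Proc.pre a (charProc φ)
  | HML.conj φ ψ => Proc.plus (charProc φ) (charProc ψ)
  | _ => Proc.nil

/-- `φ` is prime in the fragment `L`: whenever `φ` entails a disjunction of
`L`-formulas, it entails one of the disjuncts. -/
def PrimeIn {Act : Type} (L : HML Act → Prop) (φ : HML Act) : Prop :=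
  ∀ φ₁ φ₂ : HML Act, L φ₁ → L φ₂ → Entails φ (HML.disj φ₁ φ₂) →
    Entails φ φ₁ ∨ Entails φ φ₂


lemma sat_plusL {Act : Type} {φ : HML Act} (h : InConj φ) :
    ∀ {p r : Proc Act}, Sat p φ → Sat (Proc.plus p r) φ := by
  induction h with
  | tt => intro p r _; trivial
  | dia _ ih =>
    intro p r hs
    obtain ⟨p', hst, hp'⟩ := hs
    exact ⟨p', Step.plusL hst, hp'⟩
  | conj _ _ ih1 ih2 => intro p r hs; exact ⟨ih1 hs.1, ih2 hs.2⟩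

lemma sat_plusR {Act : Type} {φ : HML Act} (h : InConj φ) :
    ∀ {p r : Proc Act}, Sat p φ → Sat (Proc.plus r p) φ := by
  induction h with
  | tt => intro p r _; trivial
  | dia _ ih =>
    intro p r hs
    obtain ⟨p', hst, hp'⟩ := hs
    exact ⟨p', Step.plusR hst, hp'⟩
  | conj _ _ ih1 ih2 => intro p r hs; exact ⟨ih1 hs.1, ih2 hs.2⟩

lemma sat_charProc {Act : Type} {φ : HML Act} (h : InConj φ) :
    Sat (charProc φ) φ := by
  induction h with
  | tt => trivial
  | dia _ ih => exact ⟨_, Step.pre _ _, ih⟩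
  | conj h1 h2 ih1 ih2 => exact ⟨sat_plusL h1 ih1, sat_plusR h2 ih2⟩

lemma sim_sat {Act : Type} {ψ : HML Act} (h : InLS ψ) :
    ∀ p q : Proc Act, Sim p q → Sat p ψ → Sat q ψ := by
  induction h with
  | tt => intro p q _ _; trivial
  | ff => intro p q _ hs; exact hs.elim
  | conj _ _ ih1 ih2 => intro p q hsim hs; exact ⟨ih1 p q hsim hs.1, ih2 p q hsim hs.2⟩
  | disj _ _ ih1 ih2 =>
    intro p q hsim hs
    rcases hs with hs | hs
    · exact Or.inl (ih1 p q hsim hs)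
    · exact Or.inr (ih2 p q hsim hs)
  | dia _ ih =>
    intro p q hsim hs
    obtain ⟨p', hst, hp'⟩ := hs
    obtain ⟨R, hR, hpq⟩ := hsim
    obtain ⟨q', hqst, hRq⟩ := hR p q hpq _ p' hst
    exact ⟨q', hqst, ih p' q' ⟨R, hR, hRq⟩ hp'⟩

lemma step_charProc {Act : Type} {φ : HML Act} (h : InConj φ) :
    ∀ {a : Act} {p' : Proc Act}, Step (charProc φ) a p' →
      ∀ q : Proc Act, Sat q φ →
        ∃ ψ' q', InConj ψ' ∧ p' = charProc ψ' ∧ Step q a q' ∧ Sat q' ψ' := by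
  induction h with
  | tt => intro a p' hst; cases hst
  | @dia a0 φ0 hφ ih =>
    intro a p' hst q hq
    cases hst
    obtain ⟨q', hqst, hq'⟩ := hq
    exact ⟨φ0, q', hφ, rfl, hqst, hq'⟩
  | conj h1 h2 ih1 ih2 =>
    intro a p' hst q hq
    cases hst with
    | plusL hs => exact ih1 hs q hq.1
    | plusR hs => exact ih2 hs q hq.2

lemma sat_to_sim {Act : Type} {φ : HML Act} (h : InConj φ) {q : Proc Act}
    (hq : Sat q φ) : Sim (charProc φ) q := by
  refine ⟨fun p q => ∃ ψ, InConj ψ ∧ p = charProc ψ ∧ Sat q ψ, ?_, φ, h, rfl, hq⟩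
  rintro p q ⟨ψ, hψ, rfl, hsat⟩ a p' hstep
  obtain ⟨ψ', q', hψ', rfl, hqst, hsat'⟩ := step_charProc hψ hstep q hsat
  exact ⟨q', hqst, ψ', hψ', rfl, hsat'⟩

lemma inLS_of_inConj {Act : Type} {φ : HML Act} (h : InConj φ) : InLS φ := by
  induction h with
  | tt => exact InLS.tt
  | dia _ ih => exact InLS.dia ih
  | conj _ _ ih1 ih2 => exact InLS.conj ih1 ih2

/-- Let `φ` be generated by `φ ::= tt | ⟨a⟩φ | φ∧φ`. Then for every process `q`,
`q ⊨ φ` iff `p_φ ≲_S q`; consequently `φ` is prime in `L_S`. -/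
theorem conjFormula_characteristic_and_prime {Act : Type} [Fintype Act] [Nonempty Act]
    (φ : HML Act) (h : InConj φ) :
    (∀ q : Proc Act, Sat q φ ↔ Sim (charProc φ) q) ∧ PrimeIn InLS φ := by
  have hsat := sat_charProc h
  have hchar : ∀ q : Proc Act, Sat q φ ↔ Sim (charProc φ) q := by
    intro q
    constructor
    · exact sat_to_sim h
    · intro hsim; exact sim_sat (inLS_of_inConj h) _ q hsim hsat
  refine ⟨hchar, ?_⟩
  intro φ₁ φ₂ h1 h2 hent
  rcases hent (charProc φ) hsat with hd | hd
  · exact Or.inl (fun p hp => sim_sat h1 _ p (sat_to_sim h hp) hd)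
  · exact Or.inr (fun p hp => sim_sat h2 _ p (sat_to_sim h hp) hd)
end

section
/- Two processes p and q have a maximal lower bound with respect to the 2-nested simulation preorder ≲_{2S} if and only if p ≡_S q. -/
/-- `R` is a 2-nested simulation. -/
def Is2Sim {Act : Type} (R : Proc Act → Proc Act → Prop) : Prop :=
  ∀ p q, R p q →
    (∀ a p', Step p a p' → ∃ q', Step q a q' ∧ R p' q') ∧ Sim q p

/-- The 2-nested simulation preorder `≲_{2S}`: the largest 2-nested simulation. -/
def Sim2 {Act : Type} (p q : Proc Act) : Prop :=
  ∃ R, Is2Sim R ∧ R p q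

/-- `g` is a maximal lower bound of `p` and `q` w.r.t. the preorder `r`. -/
def MaxLowerBound {Act : Type} (r : Proc Act → Proc Act → Prop) (g p q : Proc Act) : Prop :=
  r g p ∧ r g q ∧ ∀ g' : Proc Act, r g' p → r g' q → r g' g

namespace MLBAux

variable {Act : Type}

lemma sim_refl (p : Proc Act) : Sim p p :=
  ⟨Eq, fun p q h a p' hs => h ▸ ⟨p', hs, rfl⟩, rfl⟩

lemma sim_trans {p q r : Proc Act} (h1 : Sim p q) (h2 : Sim q r) : Sim p r := by
  obtain ⟨R, hR, hpq⟩ := h1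
  obtain ⟨S, hS, hqr⟩ := h2
  refine ⟨fun x z => ∃ y, R x y ∧ S y z, ?_, ⟨q, hpq, hqr⟩⟩
  rintro x z ⟨y, hxy, hyz⟩ a x' hx
  obtain ⟨y', hy, hR'⟩ := hR x y hxy a x' hx
  obtain ⟨z', hz, hS'⟩ := hS y z hyz a y' hy
  exact ⟨z', hz, y', hR', hS'⟩

lemma sim_step {p q : Proc Act} (h : Sim p q) {a : Act} {p' : Proc Act}
    (hs : Step p a p') : ∃ q', Step q a q' ∧ Sim p' q' := by
  obtain ⟨R, hR, hpq⟩ := h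
  obtain ⟨q', hq, hR'⟩ := hR p q hpq a p' hs
  exact ⟨q', hq, R, hR, hR'⟩

lemma sim_fold {p q : Proc Act}
    (h : ∀ a p', Step p a p' → ∃ q', Step q a q' ∧ Sim p' q') : Sim p q := by
  refine ⟨fun x y => Sim x y ∨ (x = p ∧ y = q), ?_, Or.inr ⟨rfl, rfl⟩⟩
  rintro x y (hxy | ⟨rfl, rfl⟩) a x' hx
  · obtain ⟨y', hy, h'⟩ := sim_step hxy hx
    exact ⟨y', hy, Or.inl h'⟩
  · obtain ⟨y', hy, h'⟩ := h a x' hx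
    exact ⟨y', hy, Or.inl h'⟩

lemma sim2_sim {p q : Proc Act} (h : Sim2 p q) : Sim p q := by
  obtain ⟨R, hR, hpq⟩ := h
  exact ⟨R, fun x y hxy => (hR x y hxy).1, hpq⟩

lemma sim2_rev {p q : Proc Act} (h : Sim2 p q) : Sim q p := by
  obtain ⟨R, hR, hpq⟩ := h
  exact (hR p q hpq).2

lemma sim2_step {p q : Proc Act} (h : Sim2 p q) {a : Act} {p' : Proc Act}
    (hs : Step p a p') : ∃ q', Step q a q' ∧ Sim2 p' q' := by
  obtain ⟨R, hR, hpq⟩ := h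
  obtain ⟨q', hq, hR'⟩ := (hR p q hpq).1 a p' hs
  exact ⟨q', hq, R, hR, hR'⟩

lemma sim2_fold {p q : Proc Act} (hrev : Sim q p)
    (h : ∀ a p', Step p a p' → ∃ q', Step q a q' ∧ Sim2 p' q') : Sim2 p q := by
  refine ⟨fun x y => Sim2 x y ∨ (x = p ∧ y = q), ?_, Or.inr ⟨rfl, rfl⟩⟩
  rintro x y (hxy | ⟨rfl, rfl⟩)
  · refine ⟨fun a x' hx => ?_, sim2_rev hxy⟩
    obtain ⟨y', hy, h'⟩ := sim2_step hxy hx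
    exact ⟨y', hy, Or.inl h'⟩
  · refine ⟨fun a x' hx => ?_, hrev⟩
    obtain ⟨y', hy, h'⟩ := h a x' hx
    exact ⟨y', hy, Or.inl h'⟩

lemma step_nil {a : Act} {g : Proc Act} : ¬ Step Proc.nil a g := by
  intro h; cases h

lemma step_pre_iff {a c : Act} {p g : Proc Act} :
    Step (Proc.pre a p) c g ↔ c = a ∧ g = p := by
  constructor
  · intro h; cases h; exact ⟨rfl, rfl⟩
  · rintro ⟨rfl, rfl⟩; exact Step.pre _ _

lemma step_plus_iff {p₁ p₂ g : Proc Act} {c : Act} :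
    Step (Proc.plus p₁ p₂) c g ↔ Step p₁ c g ∨ Step p₂ c g := by
  constructor
  · intro h; cases h with
    | plusL h => exact Or.inl h
    | plusR h => exact Or.inr h
  · rintro (h | h)
    · exact Step.plusL h
    · exact Step.plusR h

lemma step_size {p : Proc Act} {a : Act} {p' : Proc Act} (h : Step p a p') :
    sizeOf p' < sizeOf p := by
  induction h with
  | pre a p => simp
  | plusL _ ih => simp; omega
  | plusR _ ih => simp; omega

def trans' : Proc Act → List (Act × Proc Act)
  | Proc.nil => []
  | Proc.pre a p => [(a, p)]
  | Proc.plus p q => trans' p ++ trans' q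

lemma step_iff_mem {p : Proc Act} {a : Act} {p' : Proc Act} :
    Step p a p' ↔ (a, p') ∈ trans' p := by
  induction p with
  | nil => simp [trans', step_nil]
  | pre b q => simp [trans', step_pre_iff, Prod.ext_iff]
  | plus p₁ p₂ ih₁ ih₂ => simp [trans', step_plus_iff, ih₁, ih₂]

def sumList : List (Proc Act) → Proc Act
  | [] => Proc.nil
  | r :: L => Proc.plus r (sumList L)

lemma step_sumList {L : List (Proc Act)} {c : Act} {g : Proc Act} :
    Step (sumList L) c g ↔ ∃ r ∈ L, Step r c g := by
  induction L with
  | nil => simp [sumList, step_nil]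
  | cons b L ih => simp [sumList, step_plus_iff, ih]

open scoped Classical in
noncomputable def glbProc : Proc Act → Proc Act → Proc Act
  | Proc.nil, _ => Proc.nil
  | Proc.pre a p', q => sumList ((trans' q).filterMap fun x =>
      if x.1 = a ∧ Sim p' x.2 ∧ Sim x.2 p' then some (Proc.pre a (glbProc p' x.2)) else none)
  | Proc.plus p₁ p₂, q => Proc.plus (glbProc p₁ q) (glbProc p₂ q)

lemma step_glbProc_iff {p q : Proc Act} {c : Act} {g : Proc Act} :
    Step (glbProc p q) c g ↔
      ∃ p' q', Step p c p' ∧ Step q c q' ∧ Sim p' q' ∧ Sim q' p' ∧ g = glbProc p' q' := by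
  induction p generalizing g with
  | nil =>
    simp only [glbProc, step_nil, false_iff]
    rintro ⟨p', q', hp', _⟩
    exact hp'
  | pre a p₀ =>
    rw [glbProc, step_sumList]
    constructor
    · rintro ⟨r, hr, hstep⟩
      obtain ⟨x, hx, heq⟩ := List.mem_filterMap.mp hr
      split at heq
      · rename_i hcond
        obtain ⟨rfl⟩ := Option.some_inj.mp heq
        obtain ⟨rfl, hcg⟩ := step_pre_iff.mp hstep
        refine ⟨p₀, x.2, Step.pre _ _, ?_, hcond.2.1, hcond.2.2, hcg⟩
        have hx2 : ((x.1, x.2) : Act × Proc Act) ∈ trans' q := by simpa using hx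
        have hstep2 : Step q x.1 x.2 := step_iff_mem.mpr hx2
        rwa [hcond.1] at hstep2
      · exact absurd heq (by simp)
    · rintro ⟨p', q', hp', hq', h1, h2, rfl⟩
      obtain ⟨rfl, rfl⟩ := step_pre_iff.mp hp'
      refine ⟨Proc.pre c (glbProc p' q'), ?_, Step.pre _ _⟩
      refine List.mem_filterMap.mpr ⟨(c, q'), step_iff_mem.mp hq', ?_⟩
      rw [if_pos ⟨rfl, h1, h2⟩]
  | plus p₁ p₂ ih₁ ih₂ =>
    rw [glbProc, step_plus_iff]
    constructor
    · rintro (h | h)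
      · obtain ⟨p', q', hp', rest⟩ := ih₁.mp h
        exact ⟨p', q', Step.plusL hp', rest⟩
      · obtain ⟨p', q', hp', rest⟩ := ih₂.mp h
        exact ⟨p', q', Step.plusR hp', rest⟩
    · rintro ⟨p', q', hp', rest⟩
      cases hp' with
      | plusL h => exact Or.inl (ih₁.mpr ⟨p', q', h, rest⟩)
      | plusR h => exact Or.inr (ih₂.mpr ⟨p', q', h, rest⟩)

lemma exists_max {α : Type _} {r : α → α → Prop} (ht : ∀ {x y z}, r x y → r y z → r x z) :
    ∀ (L : List α), L ≠ [] → ∃ z ∈ L, ∀ y ∈ L, r z y → r y z := by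
  intro L
  induction L with
  | nil => simp
  | cons b L ih =>
    intro _
    rcases eq_or_ne L [] with rfl | hL
    · refine ⟨b, by simp, ?_⟩
      intro y hy hby
      simp at hy; subst hy; exact hby
    · obtain ⟨z, hz, hmax⟩ := ih hL
      by_cases hzb : r z b
      · refine ⟨b, by simp, ?_⟩
        intro y hy hby
        rcases List.mem_cons.mp hy with rfl | hy
        · exact hby
        · exact ht (hmax y hy (ht hzb hby)) hzb
      · refine ⟨z, List.mem_cons_of_mem _ hz, ?_⟩
        intro y hy hzy
        rcases List.mem_cons.mp hy with rfl | hy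
        · exact absurd hzy hzb
        · exact hmax y hy hzy

lemma chain_lemma {p q : Proc Act} {a : Act} {p₀ : Proc Act}
    (hpq : Sim p q) (hqp : Sim q p) (h0 : Step p a p₀) :
    ∃ p' q', Step p a p' ∧ Step q a q' ∧ Sim p' q' ∧ Sim q' p' ∧ Sim p₀ p' := by
  classical
  set L := ((trans' p).filterMap fun x : Act × Proc Act =>
    if x.1 = a ∧ Sim p₀ x.2 then some x.2 else none) with hLdef
  have hmemL : ∀ y, y ∈ L ↔ Step p a y ∧ Sim p₀ y := by
    intro y
    constructor
    · intro hy
      obtain ⟨x, hx, heq⟩ := List.mem_filterMap.mp hy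
      split at heq
      · rename_i hcond
        obtain rfl := Option.some_inj.mp heq
        refine ⟨?_, hcond.2⟩
        have hx2 : ((x.1, x.2) : Act × Proc Act) ∈ trans' p := by simpa using hx
        have hstep2 : Step p x.1 x.2 := step_iff_mem.mpr hx2
        rwa [hcond.1] at hstep2
      · exact absurd heq (by simp)
    · rintro ⟨hstep, hsim⟩
      refine List.mem_filterMap.mpr ⟨(a, y), step_iff_mem.mp hstep, ?_⟩
      rw [if_pos ⟨rfl, hsim⟩]
  have hne : L ≠ [] :=
    List.ne_nil_of_mem ((hmemL p₀).mpr ⟨h0, sim_refl p₀⟩)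
  obtain ⟨z, hzL, hmax⟩ := exists_max (r := Sim) (fun {x y z} => sim_trans) L hne
  obtain ⟨hz1, hz2⟩ := (hmemL z).mp hzL
  obtain ⟨q', hq', hzq'⟩ := sim_step hpq hz1
  obtain ⟨p'', hp'', hq'p''⟩ := sim_step hqp hq'
  have hzp'' : Sim z p'' := sim_trans hzq' hq'p''
  have hp''L : p'' ∈ L := (hmemL p'').mpr ⟨hp'', sim_trans hz2 hzp''⟩
  have hp''z : Sim p'' z := hmax p'' hp''L hzp''
  exact ⟨z, q', hz1, hq', hzq', sim_trans hq'p'' hp''z, hz2⟩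

lemma glb_spec : ∀ (n : ℕ) (p q : Proc Act), sizeOf p + sizeOf q ≤ n →
    Sim p q → Sim q p →
    Sim2 (glbProc p q) p ∧ Sim2 (glbProc p q) q ∧
      (∀ g, Sim2 g p → Sim2 g q → Sim2 g (glbProc p q)) := by
  intro n
  induction n using Nat.strong_induction_on with
  | _ n ih =>
  intro p q hn hpq hqp
  have IH : ∀ p' q' : Proc Act, sizeOf p' < sizeOf p → sizeOf q' < sizeOf q →
      Sim p' q' → Sim q' p' →
      Sim2 (glbProc p' q') p' ∧ Sim2 (glbProc p' q') q' ∧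
        (∀ g, Sim2 g p' → Sim2 g q' → Sim2 g (glbProc p' q')) := by
    intro p' q' h1 h2
    exact ih (sizeOf p' + sizeOf q') (by omega) p' q' le_rfl
  have hA : Sim2 (glbProc p q) p := by
    apply sim2_fold
    · apply sim_fold
      intro a p₀ h0
      obtain ⟨p', q', hp', hq', h1, h2, h3⟩ := chain_lemma hpq hqp h0
      have hrec := (IH p' q' (step_size hp') (step_size hq') h1 h2).1
      exact ⟨glbProc p' q',
        step_glbProc_iff.mpr ⟨p', q', hp', hq', h1, h2, rfl⟩,
        sim_trans h3 (sim2_rev hrec)⟩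
    · intro a g hstep
      obtain ⟨p', q', hp', hq', h1, h2, rfl⟩ := step_glbProc_iff.mp hstep
      exact ⟨p', hp', (IH p' q' (step_size hp') (step_size hq') h1 h2).1⟩
  have hB : Sim2 (glbProc p q) q := by
    apply sim2_fold
    · apply sim_fold
      intro a q₀ h0
      obtain ⟨q', p', hq', hp', h1, h2, h3⟩ := chain_lemma hqp hpq h0
      have hrec := (IH p' q' (step_size hp') (step_size hq') h2 h1).2.1
      exact ⟨glbProc p' q',
        step_glbProc_iff.mpr ⟨p', q', hp', hq', h2, h1, rfl⟩,
        sim_trans h3 (sim2_rev hrec)⟩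
    · intro a g hstep
      obtain ⟨p', q', hp', hq', h1, h2, rfl⟩ := step_glbProc_iff.mp hstep
      exact ⟨q', hq', (IH p' q' (step_size hp') (step_size hq') h1 h2).2.1⟩
  refine ⟨hA, hB, ?_⟩
  intro g hgp hgq
  apply sim2_fold
  · exact sim_trans (sim2_sim hA) (sim2_rev hgp)
  · intro a g' hg'
    obtain ⟨p₀, hp₀, hgp'⟩ := sim2_step hgp hg'
    obtain ⟨q₀, hq₀, hgq'⟩ := sim2_step hgq hg'
    have e1 : Sim p₀ q₀ := sim_trans (sim2_rev hgp') (sim2_sim hgq')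
    have e2 : Sim q₀ p₀ := sim_trans (sim2_rev hgq') (sim2_sim hgp')
    exact ⟨glbProc p₀ q₀,
      step_glbProc_iff.mpr ⟨p₀, q₀, hp₀, hq₀, e1, e2, rfl⟩,
      (IH p₀ q₀ (step_size hp₀) (step_size hq₀) e1 e2).2.2 g' hgp' hgq'⟩

end MLBAux

/-- Two processes `p` and `q` have a maximal lower bound with respect to the
2-nested simulation preorder `≲_{2S}` iff `p ≡_S q`. -/
theorem mlb_exists_iff_simEquiv {Act : Type} [Fintype Act] [Nonempty Act]
    (p q : Proc Act) :
    (∃ g : Proc Act, MaxLowerBound Sim2 g p q) ↔ (Sim p q ∧ Sim q p) := by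
  open MLBAux in
  constructor
  · rintro ⟨g, hg1, hg2, _⟩
    exact ⟨sim_trans (sim2_rev hg1) (sim2_sim hg2),
      sim_trans (sim2_rev hg2) (sim2_sim hg1)⟩
  · rintro ⟨hpq, hqp⟩
    obtain ⟨h1, h2, h3⟩ := glb_spec (sizeOf p + sizeOf q) p q le_rfl hpq hqp
    exact ⟨glbProc p q, h1, h2, h3⟩
end

section
/- A formula φ ∈ L_CS is characteristic for some process with respect to complete simulation equivalence (that is, there is a process p such that for every process q, q ⊨ φ iff p ≡_CS q) if and only if φ is logically equivalent to ⋀_{a∈Act}[a]ff. -/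
/-- The formula `𝟬 = ⋀_{a ∈ Act} [a]ff`. -/
noncomputable def ZeroF (Act : Type) [Fintype Act] : HML Act :=
  ((Finset.univ : Finset Act).toList.map (fun a => HML.box a HML.ff)).foldr HML.conj HML.tt

/-- The fragment `L_CS`: `φ ::= tt | ff | φ∧φ | φ∨φ | ⟨a⟩φ | 𝟬`,
where `𝟬 = ⋀_{a ∈ Act} [a]ff`. -/
inductive InLCS {Act : Type} [Fintype Act] : HML Act → Prop
  | tt : InLCS HML.tt
  | ff : InLCS HML.ff
  | conj : ∀ {φ ψ : HML Act}, InLCS φ → InLCS ψ → InLCS (HML.conj φ ψ)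
  | disj : ∀ {φ ψ : HML Act}, InLCS φ → InLCS ψ → InLCS (HML.disj φ ψ)
  | dia : ∀ {a : Act} {φ : HML Act}, InLCS φ → InLCS (HML.dia a φ)
  | zero : InLCS (ZeroF Act)

/-- `R` is a complete simulation. -/
def IsCSim {Act : Type} (R : Proc Act → Proc Act → Prop) : Prop :=
  ∀ p q, R p q →
    (∀ a p', Step p a p' → ∃ q', Step q a q' ∧ R p' q') ∧
    (initials p = ∅ ↔ initials q = ∅)

/-- The complete simulation preorder `≲_CS`: the largest complete simulation. -/
def CSim {Act : Type} (p q : Proc Act) : Prop :=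
  ∃ R, IsCSim R ∧ R p q

section Aux

variable {Act : Type}

/-- Depth of a process. -/
def pdepth : Proc Act → ℕ
  | .nil => 0
  | .pre _ p => pdepth p + 1
  | .plus p q => max (pdepth p) (pdepth q)

lemma step_pdepth {p p' : Proc Act} {a : Act} (h : Step p a p') :
    pdepth p' < pdepth p := by
  induction h with
  | pre => simp [pdepth]
  | plusL _ ih => exact ih.trans_le (by simp [pdepth])
  | plusR _ ih => exact ih.trans_le (by simp [pdepth])

lemma no_step_nil {a : Act} {p' : Proc Act} : ¬ Step (Proc.nil) a p' := by
  intro h; nomatch h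

lemma pdepth_succ_step : ∀ (q : Proc Act) (n : ℕ), pdepth q = n + 1 →
    ∃ a q', Step q a q' ∧ n ≤ pdepth q' := by
  intro q
  induction q with
  | nil => intro n h; simp [pdepth] at h
  | pre a p _ => intro n h; exact ⟨a, p, Step.pre a p, by simp [pdepth] at h; omega⟩
  | plus p₁ p₂ ih₁ ih₂ =>
      intro n h
      simp only [pdepth] at h
      rcases max_cases (pdepth p₁) (pdepth p₂) with ⟨h1, _⟩ | ⟨h1, _⟩
      · obtain ⟨a, q', hs, hd⟩ := ih₁ n (h1 ▸ h)
        exact ⟨a, q', Step.plusL hs, hd⟩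
      · obtain ⟨a, q', hs, hd⟩ := ih₂ n (h1 ▸ h)
        exact ⟨a, q', Step.plusR hs, hd⟩

lemma sim_pdepth_le_aux : ∀ (n : ℕ) (q p : Proc Act) (R : Proc Act → Proc Act → Prop),
    IsSimulation R → R q p → pdepth q ≤ n → pdepth q ≤ pdepth p := by
  intro n
  induction n with
  | zero => intro q p R _ _ h; omega
  | succ n ih =>
      intro q p R hR hqp hle
      rcases Nat.eq_zero_or_pos (pdepth q) with h0 | hpos
      · omega
      · obtain ⟨m, hm⟩ : ∃ m, pdepth q = m + 1 := ⟨pdepth q - 1, by omega⟩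
        obtain ⟨a, q', hs, hd⟩ := pdepth_succ_step q m hm
        obtain ⟨p', hsp, hR'⟩ := hR q p hqp a q' hs
        have h1 : pdepth q' < pdepth q := step_pdepth hs
        have h2 : pdepth q' ≤ pdepth p' := ih q' p' R hR hR' (by omega)
        have h3 : pdepth p' < pdepth p := step_pdepth hsp
        omega

lemma csim_pdepth_le {q p : Proc Act} (h : CSim q p) : pdepth q ≤ pdepth p := by
  obtain ⟨R, hR, hqp⟩ := h
  exact sim_pdepth_le_aux (pdepth q) q p R (fun x y hxy => (hR x y hxy).1) hqp le_rfl

lemma initials_empty_iff {p : Proc Act} :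
    initials p = ∅ ↔ ∀ a (p' : Proc Act), ¬ Step p a p' := by
  simp [initials, Set.eq_empty_iff_forall_notMem]

lemma sat_foldr (p : Proc Act) (l : List (HML Act)) :
    Sat p (l.foldr HML.conj HML.tt) ↔ ∀ ψ ∈ l, Sat p ψ := by
  induction l with
  | nil => simp [Sat]
  | cons ψ l ih => simp [Sat, ih]

lemma sat_zero [Fintype Act] (p : Proc Act) : Sat p (ZeroF Act) ↔ initials p = ∅ := by
  rw [ZeroF, sat_foldr, initials_empty_iff]
  constructor
  · intro h a p' hs
    have := h (HML.box a HML.ff)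
      (List.mem_map.mpr ⟨a, Finset.mem_toList.mpr (Finset.mem_univ a), rfl⟩)
    exact this p' hs
  · intro h ψ hψ
    obtain ⟨a, _, rfl⟩ := List.mem_map.mp hψ
    intro p' hs
    exact h a p' hs

lemma csim_refl (p : Proc Act) : CSim p p := by
  refine ⟨Eq, ?_, rfl⟩
  intro x y hxy
  subst hxy
  exact ⟨fun a x' hs => ⟨x', hs, rfl⟩, Iff.rfl⟩

lemma csim_of_stuck {p q : Proc Act} (hp : initials p = ∅) (hq : initials q = ∅) :
    CSim p q := by
  refine ⟨fun x y => initials x = ∅ ∧ initials y = ∅, ?_, hp, hq⟩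
  rintro x y ⟨hx, hy⟩
  refine ⟨fun a x' hs => absurd hs (initials_empty_iff.mp hx a x'), by rw [hx, hy]⟩

lemma csim_to_empty {p q : Proc Act} (h : CSim p q) (hp : initials p = ∅) :
    initials q = ∅ := by
  obtain ⟨R, hR, hpq⟩ := h
  exact ((hR p q hpq).2).mp hp

/-- L_CS formulas are preserved under the complete simulation preorder. -/
lemma lcs_preserve [Fintype Act] {φ : HML Act} (h : InLCS φ) :
    ∀ p q : Proc Act, CSim p q → Sat p φ → Sat q φ := by
  induction h with
  | tt => intro p q _ _; trivial
  | ff => intro p q _ hp; exact hp.elim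
  | conj _ _ ih₁ ih₂ =>
      rintro p q hc ⟨h1, h2⟩
      exact ⟨ih₁ p q hc h1, ih₂ p q hc h2⟩
  | disj _ _ ih₁ ih₂ =>
      rintro p q hc (h1 | h1)
      · exact Or.inl (ih₁ p q hc h1)
      · exact Or.inr (ih₂ p q hc h1)
  | dia _ ih =>
      rintro p q ⟨R, hR, hpq⟩ ⟨p', hs, hp'⟩
      obtain ⟨q', hq, hR'⟩ := (hR p q hpq).1 _ _ hs
      exact ⟨q', hq, ih p' q' ⟨R, hR, hR'⟩ hp'⟩
  | zero =>
      rintro p q ⟨R, hR, hpq⟩ hp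
      rw [sat_zero] at hp ⊢
      exact ((hR p q hpq).2).mp hp

/-- n-ary sum. -/
def bigSum : List (Proc Act) → Proc Act
  | [] => .nil
  | p :: l => .plus p (bigSum l)

lemma step_bigSum {l : List (Proc Act)} {a : Act} {p' : Proc Act} :
    Step (bigSum l) a p' ↔ ∃ q ∈ l, Step q a p' := by
  induction l with
  | nil => simp [bigSum]; exact no_step_nil
  | cons q l ih =>
      constructor
      · intro h
        rcases h with _ | hs | hs
        · exact ⟨q, by simp, by assumption⟩
        · obtain ⟨r, hr, hs'⟩ := ih.mp (by assumption)
          exact ⟨r, by simp [hr], hs'⟩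
      · rintro ⟨r, hr, hs⟩
        rcases List.mem_cons.mp hr with rfl | hr
        · exact Step.plusL hs
        · exact Step.plusR (ih.mpr ⟨r, hr, hs⟩)

/-- Universal process of depth k: can do any trace of length ≤ k and deadlock
anywhere after the first step. -/
noncomputable def UProc (Act : Type) [Fintype Act] : ℕ → Proc Act
  | 0 => .nil
  | k + 1 => bigSum ((Finset.univ.toList).map
      (fun a => Proc.plus (Proc.pre a (UProc Act k)) (Proc.pre a Proc.nil)))

lemma step_UProc_self [Fintype Act] [Nonempty Act] (k : ℕ) :
    ∃ a : Act, Step (UProc Act (k + 1)) a (UProc Act k) := by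
  obtain ⟨a⟩ := ‹Nonempty Act›
  refine ⟨a, step_bigSum.mpr ⟨Proc.plus (Proc.pre a (UProc Act k)) (Proc.pre a Proc.nil),
    List.mem_map.mpr ⟨a, Finset.mem_toList.mpr (Finset.mem_univ a), rfl⟩,
    Step.plusL (Step.pre a _)⟩⟩

lemma pdepth_UProc [Fintype Act] [Nonempty Act] (k : ℕ) :
    k ≤ pdepth (UProc Act k) := by
  induction k with
  | zero => omega
  | succ k ih =>
      obtain ⟨a, hs⟩ := step_UProc_self (Act := Act) k
      have := step_pdepth hs
      omega

lemma initials_UProc_ne [Fintype Act] [Nonempty Act] (k : ℕ) :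
    initials (UProc Act (k + 1)) ≠ ∅ := by
  obtain ⟨a, hs⟩ := step_UProc_self (Act := Act) k
  intro h
  exact initials_empty_iff.mp h a _ hs

lemma nonstuck_pdepth_pos {p : Proc Act} (h : initials p ≠ ∅) : 1 ≤ pdepth p := by
  rcases Set.nonempty_iff_ne_empty.mpr h with ⟨a, p', hs⟩
  have := step_pdepth hs
  omega

/-- Any non-deadlocked process of depth ≤ k (k ≥ 1) is complete-simulated by `UProc k`. -/
lemma csim_UProc [Fintype Act] [Nonempty Act] (p : Proc Act)
    (hp : initials p ≠ ∅) (k : ℕ) (hd : pdepth p ≤ k) (hk : 1 ≤ k) :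
    CSim p (UProc Act k) := by
  classical
  refine ⟨fun x y => (initials x = ∅ ∧ initials y = ∅) ∨
      (initials x ≠ ∅ ∧ ∃ m, 1 ≤ m ∧ pdepth x ≤ m ∧ y = UProc Act m), ?_,
      Or.inr ⟨hp, k, hk, hd, rfl⟩⟩
  rintro x y (⟨hx, hy⟩ | ⟨hx, m, hm1, hmd, rfl⟩)
  · exact ⟨fun a x' hs => absurd hs (initials_empty_iff.mp hx a x'), by rw [hx, hy]⟩
  · obtain ⟨m', rfl⟩ : ∃ m', m = m' + 1 := ⟨m - 1, by omega⟩
    constructor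
    · intro a x' hs
      by_cases hx' : initials x' = ∅
      · refine ⟨Proc.nil, step_bigSum.mpr
          ⟨Proc.plus (Proc.pre a (UProc Act m')) (Proc.pre a Proc.nil),
           List.mem_map.mpr ⟨a, Finset.mem_toList.mpr (Finset.mem_univ a), rfl⟩,
           Step.plusR (Step.pre a _)⟩, Or.inl ⟨hx', initials_empty_iff.mpr
             fun _ _ => no_step_nil⟩⟩
      · have h1 := step_pdepth hs
        have h2 := nonstuck_pdepth_pos hx'
        refine ⟨UProc Act m', step_bigSum.mpr
          ⟨Proc.plus (Proc.pre a (UProc Act m')) (Proc.pre a Proc.nil),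
           List.mem_map.mpr ⟨a, Finset.mem_toList.mpr (Finset.mem_univ a), rfl⟩,
           Step.plusL (Step.pre a _)⟩, Or.inr ⟨hx', m', by omega, by omega, rfl⟩⟩
    · constructor
      · intro h; exact absurd h hx
      · intro h; exact absurd h (initials_UProc_ne m')

end Aux

/-- A formula `φ ∈ L_CS` is characteristic for some process with respect to
complete simulation equivalence iff `φ` is logically equivalent to
`⋀_{a∈Act}[a]ff`. -/
theorem LCS_characteristic_mod_csEquiv_iff {Act : Type} [Fintype Act] [Nonempty Act]
    (φ : HML Act) (h : InLCS φ) :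
    (∃ p : Proc Act, ∀ q : Proc Act, Sat q φ ↔ (CSim p q ∧ CSim q p)) ↔
      (∀ p : Proc Act, Sat p φ ↔ Sat p (ZeroF Act)) := by
  classical
  constructor
  · rintro ⟨p, hp⟩ r
    rw [sat_zero]
    by_cases hp0 : initials p = ∅
    · rw [hp r]
      constructor
      · rintro ⟨h1, _⟩; exact csim_to_empty h1 hp0
      · intro hr; exact ⟨csim_of_stuck hp0 hr, csim_of_stuck hr hp0⟩
    · exfalso
      have hsatp : Sat p φ := (hp p).mpr ⟨csim_refl p, csim_refl p⟩
      have hd1 : 1 ≤ pdepth p := nonstuck_pdepth_pos hp0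
      set k := pdepth p + 1 with hk
      have hcu : CSim p (UProc Act k) := csim_UProc p hp0 k (by omega) (by omega)
      have hsatU : Sat (UProc Act k) φ := lcs_preserve h p _ hcu hsatp
      have hback : CSim (UProc Act k) p := ((hp _).mp hsatU).2
      have h1 : pdepth (UProc Act k) ≤ pdepth p := csim_pdepth_le hback
      have h2 : k ≤ pdepth (UProc Act k) := pdepth_UProc k
      omega
  · intro hφ
    refine ⟨Proc.nil, fun q => ?_⟩
    rw [hφ q, sat_zero]
    have hnil : initials (Proc.nil : Proc Act) = ∅ :=
      initials_empty_iff.mpr fun _ _ => no_step_nil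
    constructor
    · intro hq; exact ⟨csim_of_stuck hnil hq, csim_of_stuck hq hnil⟩
    · rintro ⟨h1, _⟩; exact csim_to_empty h1 hnil
end
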